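/- Let p be a prime, H a positive integer, and N₀ a real number with 0 ≤ N₀ ≤ p. Suppose T: (subsets of {1,…,H}) → ℝ satisfies T(A) = p·(N₀/p)^|A| + E(A) with |E(A)| ≤ c for all nonempty A ⊆ {1,…,H}. Define S_r = Σ_{t=1}^{r} S(r,t) t! Σ_{|A|=t, A ⊆ {1,…,H}} T(A) for r ≥ 1 and S_0 = p, and define M_k = Σ_{r=0}^{k} C(k,r) (-H N₀/p)^(k-r) S_r. Then M_k = p·μ_k(H, N₀/p) + E', where μ_k(H,P) = Σ_{h=0}^{H} C(H,h) P^h (1-P)^(H-h) (h - HP)^k and |E'| ≤ c · Σ_{r=1}^{k} C(k,r) (HN₀/p)^(k-r) Σ_{t=1}^{r} S(r,t) t! C(H,t). -/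

import Mathlib

/-- Stirling numbers of the second kind: `stirling2 r t` is the number of
partitions of an `r`-element set into exactly `t` nonempty subsets. -/
def stirling2 : ℕ → ℕ → ℕ
  | 0, 0 => 1
  | 0, _ + 1 => 0
  | _ + 1, 0 => 0
  | n + 1, k + 1 => (k + 1) * stirling2 n (k + 1) + stirling2 n k

lemma stirling2_zero_right (n : ℕ) : stirling2 (n+1) 0 = 0 := rfl

lemma stirling2_eq_zero : ∀ {n k : ℕ}, n < k → stirling2 n k = 0
  | 0, k+1, _ => rfl
  | n+1, k+1, h => by
      have h1 : n < k + 1 := by omega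
      have h2 : n < k := by omega
      simp [stirling2, stirling2_eq_zero h1, stirling2_eq_zero h2]

lemma nat_mul_choose (n t : ℕ) :
    (n : ℝ) * n.choose t = (t+1) * n.choose (t+1) + t * n.choose t := by
  rcases le_or_gt t n with h | h
  · have := Nat.choose_succ_right_eq n t
    have h2 : ((n.choose (t+1) * (t+1) : ℕ) : ℝ) = ((n.choose t * (n - t) : ℕ) : ℝ) := by
      rw [this]
    push_cast [Nat.cast_sub h] at h2
    nlinarith [h2]
  · rw [Nat.choose_eq_zero_of_lt h, Nat.choose_eq_zero_of_lt (by omega : n < t + 1)]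
    simp

lemma pow_eq_sum_stirling (n r : ℕ) :
    ((n : ℝ)) ^ r = ∑ t ∈ Finset.range (r+1),
      (stirling2 r t : ℝ) * t.factorial * n.choose t := by
  induction r with
  | zero => simp [stirling2]
  | succ r ih =>
    have key : ∀ t : ℕ, (stirling2 r t : ℝ) * t.factorial * n.choose t * n
        = (stirling2 r t : ℝ) * (t+1).factorial * n.choose (t+1)
          + t * ((stirling2 r t : ℝ) * t.factorial * n.choose t) := by
      intro t
      have h1 := nat_mul_choose n t
      have h2 : ((t+1).factorial : ℝ) = (t+1) * t.factorial := by
        push_cast [Nat.factorial_succ]; ring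
      rw [h2]
      linear_combination (stirling2 r t : ℝ) * t.factorial * h1
    rw [pow_succ, ih, Finset.sum_mul]
    simp_rw [key]
    rw [Finset.sum_add_distrib]
    rw [Finset.sum_range_succ' (fun t => (stirling2 (r+1) t : ℝ) * t.factorial * n.choose t) (r+1)]
    have hf0 : (stirling2 (r+1) 0 : ℝ) * (Nat.factorial 0) * n.choose 0 = 0 := by
      simp [stirling2_zero_right]
    rw [hf0, add_zero]
    have hrec : ∀ i : ℕ, (stirling2 (r+1) (i+1) : ℝ) * (i+1).factorial * n.choose (i+1)
        = (stirling2 r (i+1) : ℝ) * ((i+1) * ((i+1).factorial * n.choose (i+1)))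
          + (stirling2 r i : ℝ) * (i+1).factorial * n.choose (i+1) := by
      intro i
      show ((((i+1) * stirling2 r (i+1) + stirling2 r i : ℕ)) : ℝ) * _ * _ = _
      push_cast
      ring
    simp_rw [hrec]
    rw [Finset.sum_add_distrib, add_comm]
    congr 1
    rw [Finset.sum_range_succ' (fun t => (t : ℝ) * ((stirling2 r t : ℝ) * t.factorial * n.choose t)) r]
    rw [Finset.sum_range_succ (fun x => (stirling2 r (x+1) : ℝ) * (((x:ℝ)+1) * ((x+1).factorial * n.choose (x+1)))) r]
    rw [stirling2_eq_zero (by omega : r < r + 1)]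
    push_cast
    simp only [Nat.cast_zero, zero_mul, add_zero, zero_add, mul_zero]
    apply Finset.sum_congr rfl
    intro i _
    push_cast
    ring

lemma binom_moment (H t : ℕ) (P : ℝ) :
    ∑ h ∈ Finset.range (H+1), (H.choose h : ℝ) * P^h * (1-P)^(H-h) * (h.choose t : ℝ)
      = (H.choose t : ℝ) * P^t := by
  rcases le_or_gt t H with ht | ht
  · rw [Finset.range_eq_Ico, ← Finset.sum_Ico_consecutive _ (Nat.zero_le t) (by omega : t ≤ H+1)]
    have h1 : ∑ h ∈ Finset.Ico 0 t, (H.choose h : ℝ) * P^h * (1-P)^(H-h) * (h.choose t : ℝ) = 0 := by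
      apply Finset.sum_eq_zero
      intro h hh
      rw [Finset.mem_Ico] at hh
      rw [Nat.choose_eq_zero_of_lt hh.2]
      simp
    rw [h1, zero_add, Finset.sum_Ico_eq_sum_range]
    have h2 : ∀ j ∈ Finset.range (H + 1 - t),
        (H.choose (t+j) : ℝ) * P^(t+j) * (1-P)^(H-(t+j)) * ((t+j).choose t : ℝ)
        = (H.choose t : ℝ) * P^t * ((H-t).choose j * P^j * (1-P)^((H-t)-j)) := by
      intro j hj
      rw [Finset.mem_range] at hj
      have hc : (H.choose (t+j)) * ((t+j).choose t) = H.choose t * (H - t).choose j := by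
        have := Nat.choose_mul (n := H) (k := t + j) (s := t) (by omega)
        simpa using this
      have hc' : ((H.choose (t+j)) : ℝ) * ((t+j).choose t : ℝ) = (H.choose t : ℝ) * ((H - t).choose j : ℝ) := by
        exact_mod_cast congrArg (Nat.cast : ℕ → ℝ) hc
      have he : H - (t+j) = (H-t) - j := by omega
      rw [he, pow_add]
      linear_combination (P^t * P^j * (1-P)^((H-t)-j)) * hc' 
    rw [Finset.sum_congr rfl h2, ← Finset.mul_sum]
    have h3 : ∑ j ∈ Finset.range (H + 1 - t), ((H-t).choose j : ℝ) * P^j * (1-P)^((H-t)-j) = 1 := by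
      have hr : H + 1 - t = (H - t) + 1 := by omega
      rw [hr]
      have e1 : ∑ j ∈ Finset.range ((H-t) + 1), ((H-t).choose j : ℝ) * P^j * (1-P)^((H-t)-j)
          = ∑ j ∈ Finset.range ((H-t)+1), P^j * (1-P)^((H-t)-j) * ((H-t).choose j : ℝ) := by
        apply Finset.sum_congr rfl; intro j _; ring
      rw [e1, ← add_pow]
      simp
    rw [h3, mul_one]
  · rw [Nat.choose_eq_zero_of_lt ht]
    rw [Finset.sum_eq_zero]
    · simp
    intro h hh
    rw [Finset.mem_range] at hh
    rw [Nat.choose_eq_zero_of_lt (by omega : h < t)]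
    simp

lemma range_succ_eq_insert (r : ℕ) : Finset.range (r+1) = insert 0 (Finset.Icc 1 r) := by
  ext x; simp [Finset.mem_Icc, Finset.mem_range, Finset.mem_insert]; omega

lemma weights_sum_one (H : ℕ) (P : ℝ) :
    ∑ h ∈ Finset.range (H+1), (H.choose h : ℝ) * P^h * (1-P)^(H-h) = 1 := by
  have := binom_moment H 0 P
  simpa using this

lemma moment_main (H r : ℕ) (hr : 1 ≤ r) (P : ℝ) :
    ∑ h ∈ Finset.range (H+1), (H.choose h : ℝ) * P^h * (1-P)^(H-h) * (h:ℝ)^r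
      = ∑ t ∈ Finset.Icc 1 r, (stirling2 r t : ℝ) * t.factorial * ((H.choose t : ℝ) * P^t) := by
  have step1 : ∀ h ∈ Finset.range (H+1),
      (H.choose h : ℝ) * P^h * (1-P)^(H-h) * (h:ℝ)^r
      = ∑ t ∈ Finset.range (r+1), (stirling2 r t : ℝ) * (t.factorial : ℝ) *
          ((H.choose h : ℝ) * P^h * (1-P)^(H-h) * (h.choose t : ℝ)) := by
    intro h _
    rw [pow_eq_sum_stirling h r, Finset.mul_sum]
    apply Finset.sum_congr rfl
    intro t _
    ring
  rw [Finset.sum_congr rfl step1, Finset.sum_comm]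
  have step2 : ∀ t ∈ Finset.range (r+1),
      ∑ h ∈ Finset.range (H+1), (stirling2 r t : ℝ) * (t.factorial : ℝ) *
          ((H.choose h : ℝ) * P^h * (1-P)^(H-h) * (h.choose t : ℝ))
      = (stirling2 r t : ℝ) * t.factorial * ((H.choose t : ℝ) * P^t) := by
    intro t _
    rw [← Finset.mul_sum, binom_moment H t P]
  rw [Finset.sum_congr rfl step2, range_succ_eq_insert, Finset.sum_insert (by simp)]
  obtain ⟨m, rfl⟩ : ∃ m, r = m + 1 := ⟨r - 1, by omega⟩
  have : stirling2 (m+1) 0 = 0 := rfl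
  rw [this]
  simp


/-- The abstract moment computation: if the pattern counts `T(A)` are within `c` of
their expected value `p(N₀/p)^|A|`, then the `k`-th moment `M_k` equals
`p·μ_k(H, N₀/p)` up to a controlled error. -/
theorem moment_computation (p H : ℕ) (hp : p.Prime) (hH : 0 < H)
    (N₀ c : ℝ) (hN₀0 : 0 ≤ N₀) (hN₀p : N₀ ≤ p) (k : ℕ)
    (T : Finset ℕ → ℝ)
    (hT : ∀ A ⊆ Finset.Icc 1 H, A.Nonempty →
      |T A - p * (N₀ / p) ^ A.card| ≤ c) :
    ∃ E' : ℝ,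
      (∑ r ∈ Finset.range (k + 1), (k.choose r : ℝ) * (-(H * N₀ / p)) ^ (k - r) *
          (if r = 0 then (p : ℝ)
            else ∑ t ∈ Finset.Icc 1 r, (stirling2 r t : ℝ) * (t.factorial : ℝ) *
              ∑ A ∈ (Finset.Icc 1 H).powersetCard t, T A))
        = p * (∑ h ∈ Finset.range (H + 1),
            (H.choose h : ℝ) * (N₀ / p) ^ h * (1 - N₀ / p) ^ (H - h)
              * ((h : ℝ) - H * (N₀ / p)) ^ k) + E'
      ∧ |E'| ≤ c * ∑ r ∈ Finset.Icc 1 k, (k.choose r : ℝ) * (H * N₀ / p) ^ (k - r) *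
          ∑ t ∈ Finset.Icc 1 r, (stirling2 r t : ℝ) * (t.factorial : ℝ) * (H.choose t : ℝ) := by
  have hp0 : (0:ℝ) < p := by exact_mod_cast hp.pos
  set P : ℝ := N₀ / p with hP
  have hx0 : (0:ℝ) ≤ H * N₀ / p := by positivity
  set coeff : ℕ → ℝ := fun r => (k.choose r : ℝ) * (-(H * N₀ / p)) ^ (k - r) with hcoeff
  set err : ℕ → ℝ := fun r => ∑ t ∈ Finset.Icc 1 r, (stirling2 r t : ℝ) * (t.factorial : ℝ) *
      ∑ A ∈ (Finset.Icc 1 H).powersetCard t, (T A - p * P ^ t) with herr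
  set B : ℕ → ℝ := fun r => ∑ h ∈ Finset.range (H+1),
      (H.choose h : ℝ) * P^h * (1-P)^(H-h) * (h:ℝ)^r with hB
  have hcardA : ∀ t : ℕ, ((Finset.Icc 1 H).powersetCard t).card = H.choose t := by
    intro t
    rw [Finset.card_powersetCard, Nat.card_Icc]
    norm_num
  refine ⟨∑ r ∈ Finset.Icc 1 k, coeff r * err r, ?_, ?_⟩
  · -- equality
    have hterm : ∀ r ∈ Finset.range (k+1),
        coeff r * (if r = 0 then (p : ℝ)
            else ∑ t ∈ Finset.Icc 1 r, (stirling2 r t : ℝ) * (t.factorial : ℝ) *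
              ∑ A ∈ (Finset.Icc 1 H).powersetCard t, T A)
        = coeff r * ((p:ℝ) * B r) + (if r = 0 then 0 else coeff r * err r) := by
      intro r _
      by_cases hr : r = 0
      · subst hr
        simp only [if_pos, hB]
        have : ∑ h ∈ Finset.range (H+1), (H.choose h : ℝ) * P^h * (1-P)^(H-h) * (h:ℝ)^0 = 1 := by
          simpa using weights_sum_one H P
        rw [this]
        ring
      · rw [if_neg hr, if_neg hr]
        have hr1 : 1 ≤ r := by omega
        have hA : ∀ t ∈ Finset.Icc 1 r,
            (stirling2 r t : ℝ) * (t.factorial : ℝ) * ∑ A ∈ (Finset.Icc 1 H).powersetCard t, T A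
            = (stirling2 r t : ℝ) * (t.factorial : ℝ) * ((H.choose t : ℝ) * ((p:ℝ) * P^t))
              + (stirling2 r t : ℝ) * (t.factorial : ℝ) *
                  ∑ A ∈ (Finset.Icc 1 H).powersetCard t, (T A - p * P ^ t) := by
          intro t _
          have : ∑ A ∈ (Finset.Icc 1 H).powersetCard t, (T A - (p:ℝ) * P ^ t)
              = (∑ A ∈ (Finset.Icc 1 H).powersetCard t, T A) - (H.choose t : ℝ) * ((p:ℝ) * P^t) := by
            rw [Finset.sum_sub_distrib, Finset.sum_const, hcardA t, nsmul_eq_mul]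
          rw [this]
          ring
        rw [Finset.sum_congr rfl hA, Finset.sum_add_distrib]
        have hmain : ∑ t ∈ Finset.Icc 1 r,
            (stirling2 r t : ℝ) * (t.factorial : ℝ) * ((H.choose t : ℝ) * ((p:ℝ) * P^t))
            = (p:ℝ) * B r := by
          simp only [hB]
          rw [moment_main H r hr1 P, Finset.mul_sum]
          apply Finset.sum_congr rfl
          intro t _
          ring
        rw [hmain, herr]
        ring
    rw [Finset.sum_congr rfl hterm, Finset.sum_add_distrib]
    congr 1
    · -- ∑ coeff r * (p * B r) = p * μ
      have hexp : ∀ h ∈ Finset.range (H+1),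
          (p:ℝ) * ((H.choose h : ℝ) * P ^ h * (1 - P) ^ (H - h) * ((h : ℝ) - H * P) ^ k)
          = ∑ r ∈ Finset.range (k+1),
              coeff r * ((p:ℝ) * ((H.choose h : ℝ) * P ^ h * (1 - P) ^ (H - h) * (h:ℝ)^r)) := by
        intro h _
        have hsub : ((h : ℝ) - H * P) = (h : ℝ) + (-(H * N₀ / p)) := by
          rw [hP]; ring
        rw [hsub, add_pow, Finset.mul_sum, Finset.mul_sum]
        apply Finset.sum_congr rfl
        intro r _
        rw [hcoeff]
        ring
      rw [Finset.mul_sum, Finset.sum_congr rfl hexp, Finset.sum_comm]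
      apply Finset.sum_congr rfl
      intro r _
      rw [hB, Finset.mul_sum, Finset.mul_sum]
    · -- if-sum equals Icc sum
      rw [range_succ_eq_insert k, Finset.sum_insert (by simp)]
      simp only [if_pos, zero_add]
      apply Finset.sum_congr rfl
      intro r hr
      rw [Finset.mem_Icc] at hr
      rw [if_neg (by omega)]
  · -- bound
    have habs : ∀ r ∈ Finset.Icc 1 k, |coeff r * err r|
        ≤ c * ((k.choose r : ℝ) * (H * N₀ / p) ^ (k - r) *
            ∑ t ∈ Finset.Icc 1 r, (stirling2 r t : ℝ) * (t.factorial : ℝ) * (H.choose t : ℝ)) := by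
      intro r hr
      rw [Finset.mem_Icc] at hr
      have hc1 : |coeff r| = (k.choose r : ℝ) * (H * N₀ / p) ^ (k - r) := by
        rw [hcoeff, abs_mul, abs_pow, abs_neg, abs_of_nonneg hx0,
          abs_of_nonneg (by positivity : (0:ℝ) ≤ (k.choose r : ℝ))]
      have herr_bound : |err r| ≤ ∑ t ∈ Finset.Icc 1 r,
          (stirling2 r t : ℝ) * (t.factorial : ℝ) * ((H.choose t : ℝ) * c) := by
        rw [herr]
        refine (Finset.abs_sum_le_sum_abs _ _).trans (Finset.sum_le_sum ?_)
        intro t ht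
        rw [Finset.mem_Icc] at ht
        rw [abs_mul, abs_mul]
        rw [abs_of_nonneg (by positivity : (0:ℝ) ≤ (stirling2 r t : ℝ)),
          abs_of_nonneg (by positivity : (0:ℝ) ≤ (t.factorial : ℝ))]
        rw [mul_assoc, mul_assoc]
        apply mul_le_mul_of_nonneg_left _ (by positivity)
        apply mul_le_mul_of_nonneg_left _ (by positivity)
        refine (Finset.abs_sum_le_sum_abs _ _).trans ?_
        have : ∀ A ∈ (Finset.Icc 1 H).powersetCard t, |T A - (p:ℝ) * P ^ t| ≤ c := by
          intro A hA
          rw [Finset.mem_powersetCard] at hA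
          have hcard : A.card = t := hA.2
          have hne : A.Nonempty := by
            rw [← Finset.card_pos, hcard]; omega
          have := hT A hA.1 hne
          rw [hcard] at this
          exact this
        calc ∑ A ∈ (Finset.Icc 1 H).powersetCard t, |T A - (p:ℝ) * P ^ t|
            ≤ ∑ A ∈ (Finset.Icc 1 H).powersetCard t, c := Finset.sum_le_sum this
          _ = (H.choose t : ℝ) * c := by
              rw [Finset.sum_const, hcardA t, nsmul_eq_mul]
      calc |coeff r * err r| = |coeff r| * |err r| := abs_mul _ _
        _ ≤ |coeff r| * ∑ t ∈ Finset.Icc 1 r,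
              (stirling2 r t : ℝ) * (t.factorial : ℝ) * ((H.choose t : ℝ) * c) :=
            mul_le_mul_of_nonneg_left herr_bound (abs_nonneg _)
        _ = c * ((k.choose r : ℝ) * (H * N₀ / p) ^ (k - r) *
              ∑ t ∈ Finset.Icc 1 r, (stirling2 r t : ℝ) * (t.factorial : ℝ) * (H.choose t : ℝ)) := by
            rw [hc1, Finset.mul_sum, Finset.mul_sum, Finset.mul_sum]
            apply Finset.sum_congr rfl
            intro t _
            ring
    calc |∑ r ∈ Finset.Icc 1 k, coeff r * err r|
        ≤ ∑ r ∈ Finset.Icc 1 k, |coeff r * err r| := Finset.abs_sum_le_sum_abs _ _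
      _ ≤ ∑ r ∈ Finset.Icc 1 k, c * ((k.choose r : ℝ) * (H * N₀ / p) ^ (k - r) *
            ∑ t ∈ Finset.Icc 1 r, (stirling2 r t : ℝ) * (t.factorial : ℝ) * (H.choose t : ℝ)) :=
          Finset.sum_le_sum habs
      _ = c * ∑ r ∈ Finset.Icc 1 k, (k.choose r : ℝ) * (H * N₀ / p) ^ (k - r) *
            ∑ t ∈ Finset.Icc 1 r, (stirling2 r t : ℝ) * (t.factorial : ℝ) * (H.choose t : ℝ) := by
          rw [Finset.mul_sum]
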